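/- Let M be strictly increasing integers and define Δ(A) = 2·cost(A) − inv(A) for integer sequences A (with cost and inv relative to M). Suppose B minimizes Δ over all integer sequences with entries in [m_1, m_n], and among minimizers has maximum sum of entries. Then B is non-decreasing. -/

import Mathlib

/-- The number of weak inversions of an integer sequence `A` relative to a strictly
increasing sequence `m`. -/
def invCount {n : ℕ} (A : Fin n → ℤ) : ℤ :=
  ((Finset.univ.filter (fun p : Fin n × Fin n => p.1 < p.2 ∧ A p.2 ≤ A p.1)).card : ℤ)

/-- The ℓ1 distance of `A` from `m`. -/
def cost {n : ℕ} (m A : Fin n → ℤ) : ℤ := ∑ i, |A i - m i|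

/-- The potential `Δ(A) = 2 cost(A) − inv(A)`. -/
def Δ {n : ℕ} (m A : Fin n → ℤ) : ℤ := 2 * cost m A - invCount A

lemma invCount_eq_sum' {n : ℕ} (A : Fin n → ℤ) :
    invCount A = ∑ p : Fin n × Fin n, if p.1 < p.2 ∧ A p.2 ≤ A p.1 then (1:ℤ) else 0 := by
  unfold invCount
  rw [Finset.card_filter]
  push_cast
  simp

lemma sum_update_gen' {n : ℕ} (f : Fin n → ℤ) (g : Fin n → ℤ → ℤ) (k : Fin n) (x : ℤ) :
    ∑ i, g i (Function.update f k x i) = (∑ i, g i (f i)) + (g k x - g k (f k)) := by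
  rw [← Finset.sum_erase_add _ _ (Finset.mem_univ k),
      ← Finset.sum_erase_add _ (fun i => g i (f i)) (Finset.mem_univ k)]
  have h : ∑ i ∈ Finset.univ.erase k, g i (Function.update f k x i)
      = ∑ i ∈ Finset.univ.erase k, g i (f i) := by
    refine Finset.sum_congr rfl fun j hj => ?_
    rw [Function.update_of_ne (Finset.ne_of_mem_erase hj)]
  rw [h, Function.update_self]
  ring

lemma pointwise_swap' {n : ℕ} (i : Fin n) (B : Fin (n+1) → ℤ)
    (huv : B i.succ ≤ B i.castSucc) (a b : Fin (n+1)) :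
    (if a < b ∧ Function.update B i.succ (B i.castSucc) b ≤ Function.update B i.succ (B i.castSucc) a then (1:ℤ) else 0)
    + (if (Equiv.swap i.castSucc i.succ) a < (Equiv.swap i.castSucc i.succ) b ∧
        Function.update B i.castSucc (B i.succ) ((Equiv.swap i.castSucc i.succ) b) ≤
        Function.update B i.castSucc (B i.succ) ((Equiv.swap i.castSucc i.succ) a) then (1:ℤ) else 0)
    = (if a < b ∧ B b ≤ B a then (1:ℤ) else 0)
    + (if (Equiv.swap i.castSucc i.succ) a < (Equiv.swap i.castSucc i.succ) b ∧
        B ((Equiv.swap i.castSucc i.succ) b) ≤ B ((Equiv.swap i.castSucc i.succ) a) then (1:ℤ) else 0) := by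
  have hick : i.castSucc ≠ i.succ := by simp [Fin.ext_iff]
  rcases eq_or_ne a i.castSucc with rfl | ha1
  · rcases eq_or_ne b i.castSucc with rfl | hb1
    · simp
    · rcases eq_or_ne b i.succ with rfl | hb2
      · rw [Equiv.swap_apply_left, Equiv.swap_apply_right]
        simp only [Function.update_self, Function.update_of_ne hick,
          Function.update_of_ne hick.symm, Fin.lt_def, Fin.coe_castSucc, Fin.val_succ]
        have hicv : ((i.castSucc : Fin (n+1)) : ℕ) = (i : ℕ) := by simp
        have hisv : ((i.succ : Fin (n+1)) : ℕ) = (i : ℕ) + 1 := by simp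
        split_ifs <;> omega
      · rw [Equiv.swap_apply_left, Equiv.swap_apply_of_ne_of_ne hb1 hb2]
        simp only [Function.update_self, Function.update_of_ne hb2,
          Function.update_of_ne hb1, Function.update_of_ne hick,
          Function.update_of_ne hick.symm,
          Fin.lt_def, Fin.coe_castSucc, Fin.val_succ]
  · rcases eq_or_ne a i.succ with rfl | ha2
    · rcases eq_or_ne b i.castSucc with rfl | hb1
      · rw [Equiv.swap_apply_left, Equiv.swap_apply_right]
        simp only [Function.update_self, Function.update_of_ne hick,
          Function.update_of_ne hick.symm, Fin.lt_def, Fin.coe_castSucc, Fin.val_succ]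
        have hicv : ((i.castSucc : Fin (n+1)) : ℕ) = (i : ℕ) := by simp
        have hisv : ((i.succ : Fin (n+1)) : ℕ) = (i : ℕ) + 1 := by simp
        split_ifs <;> omega
      · rcases eq_or_ne b i.succ with rfl | hb2
        · simp
        · rw [Equiv.swap_apply_right, Equiv.swap_apply_of_ne_of_ne hb1 hb2]
          simp only [Function.update_self, Function.update_of_ne hb2,
            Function.update_of_ne hb1, Function.update_of_ne hick.symm,
            Fin.lt_def, Fin.coe_castSucc, Fin.val_succ]
          have hb1' : (b:ℕ) ≠ i := fun h => hb1 (Fin.ext (by simpa using h))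
          have hb2' : (b:ℕ) ≠ i + 1 := fun h => hb2 (Fin.ext (by simpa using h))
          have hicv : ((i.castSucc : Fin (n+1)) : ℕ) = (i : ℕ) := by simp
          have hisv : ((i.succ : Fin (n+1)) : ℕ) = (i : ℕ) + 1 := by simp
          split_ifs <;> omega
    · rcases eq_or_ne b i.castSucc with rfl | hb1
      · rw [Equiv.swap_apply_left, Equiv.swap_apply_of_ne_of_ne ha1 ha2]
        simp only [Function.update_self, Function.update_of_ne ha2,
          Function.update_of_ne ha1, Function.update_of_ne hick,
          Function.update_of_ne hick.symm,
          Fin.lt_def, Fin.coe_castSucc, Fin.val_succ]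
      · rcases eq_or_ne b i.succ with rfl | hb2
        · rw [Equiv.swap_apply_right, Equiv.swap_apply_of_ne_of_ne ha1 ha2]
          simp only [Function.update_self, Function.update_of_ne ha2,
            Function.update_of_ne ha1, Function.update_of_ne hick.symm,
            Fin.lt_def, Fin.coe_castSucc, Fin.val_succ]
          have ha1' : (a:ℕ) ≠ i := fun h => ha1 (Fin.ext (by simpa using h))
          have ha2' : (a:ℕ) ≠ i + 1 := fun h => ha2 (Fin.ext (by simpa using h))
          have hicv : ((i.castSucc : Fin (n+1)) : ℕ) = (i : ℕ) := by simp
          have hisv : ((i.succ : Fin (n+1)) : ℕ) = (i : ℕ) + 1 := by simp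
          split_ifs <;> omega
        · rw [Equiv.swap_apply_of_ne_of_ne ha1 ha2, Equiv.swap_apply_of_ne_of_ne hb1 hb2]
          simp only [Function.update_of_ne ha2, Function.update_of_ne ha1,
            Function.update_of_ne hb2, Function.update_of_ne hb1]

lemma inv_update_add' {n : ℕ} (i : Fin n) (B : Fin (n+1) → ℤ)
    (huv : B i.succ ≤ B i.castSucc) :
    invCount (Function.update B i.succ (B i.castSucc)) +
      invCount (Function.update B i.castSucc (B i.succ)) = 2 * invCount B := by
  set e : Fin (n+1) ≃ Fin (n+1) := Equiv.swap i.castSucc i.succ with he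
  set σ : (Fin (n+1) × Fin (n+1)) ≃ (Fin (n+1) × Fin (n+1)) := e.prodCongr e with hσ
  rw [invCount_eq_sum', invCount_eq_sum', invCount_eq_sum']
  have h2 : ∑ p : Fin (n+1) × Fin (n+1),
        (if p.1 < p.2 ∧ Function.update B i.castSucc (B i.succ) p.2 ≤
          Function.update B i.castSucc (B i.succ) p.1 then (1:ℤ) else 0)
      = ∑ p : Fin (n+1) × Fin (n+1),
        (if (σ p).1 < (σ p).2 ∧ Function.update B i.castSucc (B i.succ) (σ p).2 ≤
          Function.update B i.castSucc (B i.succ) (σ p).1 then (1:ℤ) else 0) :=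
    (Equiv.sum_comp σ _).symm
  have h3 : ∑ p : Fin (n+1) × Fin (n+1),
        (if p.1 < p.2 ∧ B p.2 ≤ B p.1 then (1:ℤ) else 0)
      = ∑ p : Fin (n+1) × Fin (n+1),
        (if (σ p).1 < (σ p).2 ∧ B (σ p).2 ≤ B (σ p).1 then (1:ℤ) else 0) :=
    (Equiv.sum_comp σ _).symm
  rw [h2, two_mul]
  nth_rewrite 2 [h3]
  rw [← Finset.sum_add_distrib, ← Finset.sum_add_distrib]
  refine Finset.sum_congr rfl fun p _ => ?_
  exact pointwise_swap' i B huv p.1 p.2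

lemma abs4' {u v p q : ℤ} (huv : u ≤ v) (hpq : p ≤ q) :
    |v - q| + |u - p| ≤ |v - p| + |u - q| := by
  rcases abs_cases (v - q) with ⟨h1, _⟩ | ⟨h1, _⟩ <;>
  rcases abs_cases (u - p) with ⟨h2, _⟩ | ⟨h2, _⟩ <;>
  rcases abs_cases (v - p) with ⟨h3, _⟩ | ⟨h3, _⟩ <;>
  rcases abs_cases (u - q) with ⟨h4, _⟩ | ⟨h4, _⟩ <;> omega

/-- If `B` minimizes `Δ` over all integer sequences with entries in `[m 0, m (last)]`, and
among such minimizers has maximum sum of entries, then `B` is non-decreasing. -/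
theorem minimizer_monotone (n : ℕ) (m : Fin (n + 1) → ℤ) (hm : StrictMono m)
    (B : Fin (n + 1) → ℤ)
    (hBrange : ∀ i, m 0 ≤ B i ∧ B i ≤ m (Fin.last n))
    (hBmin : ∀ A : Fin (n + 1) → ℤ, (∀ i, m 0 ≤ A i ∧ A i ≤ m (Fin.last n)) →
      Δ m B ≤ Δ m A)
    (hBmax : ∀ A : Fin (n + 1) → ℤ, (∀ i, m 0 ≤ A i ∧ A i ≤ m (Fin.last n)) →
      Δ m A = Δ m B → ∑ i, A i ≤ ∑ i, B i) :
    Monotone B := by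
  rw [Fin.monotone_iff_le_succ]
  intro i
  by_contra hlt
  push_neg at hlt
  set u := B i.succ with hu
  set v := B i.castSucc with hv
  set A1 := Function.update B i.succ v with hA1
  set A2 := Function.update B i.castSucc u with hA2
  have hA1r : ∀ j, m 0 ≤ A1 j ∧ A1 j ≤ m (Fin.last n) := by
    intro j
    rcases eq_or_ne j i.succ with rfl | hj
    · rw [hA1, Function.update_self]; exact hBrange i.castSucc
    · rw [hA1, Function.update_of_ne hj]; exact hBrange j
  have hA2r : ∀ j, m 0 ≤ A2 j ∧ A2 j ≤ m (Fin.last n) := by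
    intro j
    rcases eq_or_ne j i.castSucc with rfl | hj
    · rw [hA2, Function.update_self]; exact hBrange i.succ
    · rw [hA2, Function.update_of_ne hj]; exact hBrange j
  have hcost1 : cost m A1 = cost m B + (|v - m i.succ| - |u - m i.succ|) :=
    sum_update_gen' B (fun j t => |t - m j|) i.succ v
  have hcost2 : cost m A2 = cost m B + (|u - m i.castSucc| - |v - m i.castSucc|) :=
    sum_update_gen' B (fun j t => |t - m j|) i.castSucc u
  have hinv : invCount A1 + invCount A2 = 2 * invCount B :=
    inv_update_add' i B hlt.le
  have habs : |v - m i.succ| + |u - m i.castSucc| ≤ |v - m i.castSucc| + |u - m i.succ| :=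
    abs4' hlt.le (hm (Fin.castSucc_lt_succ (i := i))).le
  have h2 := hBmin A2 hA2r
  have h1 := hBmin A1 hA1r
  have heq : Δ m A1 = Δ m B := by
    unfold Δ at *
    omega
  have hs := hBmax A1 hA1r heq
  have hsum : ∑ j, A1 j = (∑ j, B j) + (v - u) := by
    have := sum_update_gen' B (fun _ t => t) i.succ v
    simpa using this
  omega
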